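/- Let G be a finite simple graph such that χ*(G) · α*(G) < |V(G)|, and set t = χ*(G). Then the entanglement-assisted independence number of the disjoint union of t copies of G satisfies α*(G^{+t}) > t · α*(G). -/

import Mathlib

open scoped BigOperators ComplexOrder
open Matrix

noncomputable section

namespace ZeroError

variable {V W : Type*}

/-- The independence number of a simple graph: the maximum cardinality of a set of
pairwise non-adjacent vertices. -/
def indepNum [Fintype V] (G : SimpleGraph V) : ℕ :=
  sSup {n | ∃ s : Finset V, s.card = n ∧ ∀ u ∈ s, ∀ v ∈ s, u ≠ v → ¬ G.Adj u v}

/-- The strong product of two simple graphs. -/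
def strongProd (G : SimpleGraph V) (H : SimpleGraph W) : SimpleGraph (V × W) where
  Adj x y := x ≠ y ∧ (x.1 = y.1 ∨ G.Adj x.1 y.1) ∧ (x.2 = y.2 ∨ H.Adj x.2 y.2)
  symm := by
    constructor
    rintro x y ⟨hne, h1, h2⟩
    exact ⟨hne.symm, h1.imp Eq.symm (fun a => a.symm), h2.imp Eq.symm (fun a => a.symm)⟩
  loopless := by constructor; rintro x ⟨hne, -⟩; exact hne rfl

/-- The n-fold strong power of a simple graph. -/
def strongPow (G : SimpleGraph V) (n : ℕ) : SimpleGraph (Fin n → V) where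
  Adj u v := u ≠ v ∧ ∀ i, u i = v i ∨ G.Adj (u i) (v i)
  symm := by
    constructor
    rintro u v ⟨hne, h⟩
    exact ⟨hne.symm, fun i => (h i).imp Eq.symm (fun a => a.symm)⟩
  loopless := by constructor; rintro u ⟨hne, -⟩; exact hne rfl

/-- `copies G ℓ` is the disjoint union `G^{+ℓ}` of ℓ copies of `G`. -/
def copies (G : SimpleGraph V) (ℓ : ℕ) : SimpleGraph (V × Fin ℓ) where
  Adj x y := x.2 = y.2 ∧ G.Adj x.1 y.1
  symm := by constructor; rintro x y ⟨h1, h2⟩; exact ⟨h1.symm, h2.symm⟩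
  loopless := by constructor; rintro x ⟨-, h⟩; exact G.loopless.irrefl _ h

/-- The Cartesian product `G □ K_t` of a graph with the complete graph on `t` vertices. -/
def cartProdK (G : SimpleGraph V) (t : ℕ) : SimpleGraph (V × Fin t) where
  Adj x y := (G.Adj x.1 y.1 ∧ x.2 = y.2) ∨ (x.1 = y.1 ∧ x.2 ≠ y.2)
  symm := by
    constructor
    rintro x y (⟨h1, h2⟩ | ⟨h1, h2⟩)
    · exact Or.inl ⟨h1.symm, h2.symm⟩
    · exact Or.inr ⟨h1.symm, h2.symm⟩
  loopless := by constructor; rintro x (⟨h, -⟩ | ⟨-, h⟩); exacts [G.loopless.irrefl _ h, h rfl]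

/-- The chromatic number: the least number of colors of a proper coloring. -/
def chromNum [Fintype V] (G : SimpleGraph V) : ℕ :=
  sInf {m | ∃ c : V → Fin m, ∀ u v, G.Adj u v → c u ≠ c v}

/-- The entanglement-assisted independence number `α*(G)`. -/
def qIndepNum [Fintype V] (G : SimpleGraph V) : ℕ :=
  sSup {m | ∃ (d : ℕ) (ρ : Matrix (Fin d) (Fin d) ℂ)
      (σ : Fin m → V → Matrix (Fin d) (Fin d) ℂ),
    ρ.PosSemidef ∧ ρ.trace = 1 ∧ (∀ i u, (σ i u).PosSemidef) ∧
    (∀ i, ∑ u, σ i u = ρ) ∧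
    ∀ i j u v, i ≠ j → (u = v ∨ G.Adj u v) → σ i u * σ j v = 0}

/-- The entanglement-assisted chromatic number `χ*(G)`. -/
def qChromNum [Fintype V] (G : SimpleGraph V) : ℕ :=
  sInf {m | ∃ (d : ℕ) (ρ : Matrix (Fin d) (Fin d) ℂ)
      (σ : V → Fin m → Matrix (Fin d) (Fin d) ℂ),
    ρ.PosSemidef ∧ ρ.trace = 1 ∧ (∀ x i, (σ x i).PosSemidef) ∧
    (∀ x, ∑ i, σ x i = ρ) ∧
    ∀ x y i, G.Adj x y → σ x i * σ y i = 0}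

/-- The partial trace onto the k-th tensor factor:
`(Tr_{B_{-k}} M)_{a,b} = Σ M_{s,t}` over tuples `s, t` with `s k = a`, `t k = b` and
`s r = t r` for all `r ≠ k`. -/
def ptraceK {d ℓ : ℕ} (k : Fin ℓ)
    (M : Matrix (Fin ℓ → Fin d) (Fin ℓ → Fin d) ℂ) : Matrix (Fin d) (Fin d) ℂ :=
  Matrix.of fun a b => ∑ s : Fin ℓ → Fin d, ∑ t : Fin ℓ → Fin d,
    if s k = a ∧ t k = b ∧ ∀ r, r ≠ k → s r = t r then M s t else 0

/-- The entanglement-assisted compound independence number `α*_{1,ℓ}(G)` with ℓ receivers. -/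
def qCompoundNum [Fintype V] (G : SimpleGraph V) (ℓ : ℕ) : ℕ :=
  sSup {m | ∃ (d : ℕ) (ρ : Matrix (Fin ℓ → Fin d) (Fin ℓ → Fin d) ℂ)
      (σ : Fin m → V → Matrix (Fin ℓ → Fin d) (Fin ℓ → Fin d) ℂ),
    ρ.PosSemidef ∧ ρ.trace = 1 ∧ (∀ i u, (σ i u).PosSemidef) ∧
    (∀ i, ∑ u, σ i u = ρ) ∧
    ∀ (k : Fin ℓ) i j u v, i ≠ j → (u = v ∨ G.Adj u v) →
      ptraceK k (σ i u) * ptraceK k (σ j v) = 0}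

/-- The Shannon capacity `c(G) = sup_{n ≥ 1} (1/n) log₂ α(G^{⊠n})`. -/
def shannonCap [Fintype V] (G : SimpleGraph V) : ℝ :=
  ⨆ n : ℕ+, Real.logb 2 (indepNum (strongPow G (n : ℕ))) / ((n : ℕ) : ℝ)

/-- The entangled Shannon capacity `c*(G) = sup_{n ≥ 1} (1/n) log₂ α*(G^{⊠n})`. -/
def qShannonCap [Fintype V] (G : SimpleGraph V) : ℝ :=
  ⨆ n : ℕ+, Real.logb 2 (qIndepNum (strongPow G (n : ℕ))) / ((n : ℕ) : ℝ)

/-- The entanglement-assisted compound Shannon capacity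
`c*_{1,ℓ}(G) = sup_{n ≥ 1} (1/n) log₂ α*_{1,ℓ}(G^{⊠n})`. -/
def qCompoundCap [Fintype V] (G : SimpleGraph V) (ℓ : ℕ) : ℝ :=
  ⨆ n : ℕ+, Real.logb 2 (qCompoundNum (strongPow G (n : ℕ)) ℓ) / ((n : ℕ) : ℝ)

/-- The edge-clique cover number `θ_e(G)`: the least number of cliques covering all edges. -/
def edgeCliqueCoverNum [Fintype V] (G : SimpleGraph V) : ℕ :=
  sInf {n | ∃ F : Finset (Finset V), F.card = n ∧ (∀ c ∈ F, G.IsClique (c : Set V)) ∧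
    ∀ u v, G.Adj u v → ∃ c ∈ F, u ∈ c ∧ v ∈ c}

/-- `θ'_e(G)`: the edge-clique cover number plus the number of isolated vertices. -/
def thetaPrime [Fintype V] (G : SimpleGraph V) : ℕ :=
  edgeCliqueCoverNum G + {v : V | ∀ u, ¬ G.Adj v u}.ncard

/-- `f` is an orthogonal representation of `G` in dimension `d`. -/
def IsOrthRep (G : SimpleGraph V) (d : ℕ) (f : V → EuclideanSpace ℂ (Fin d)) : Prop :=
  (∀ v, ‖f v‖ = 1) ∧ ∀ u v, G.Adj u v → inner ℂ (f u) (f v) = (0 : ℂ)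

/-- The orthogonal rank `ξ(G)`. -/
def orthRank (G : SimpleGraph V) : ℕ :=
  sInf {d | ∃ f : V → EuclideanSpace ℂ (Fin d), IsOrthRep G d f}

/-- Vertices of the quarter orthogonality graph `Γ_k`: ±1-vectors of length `k+1`
with first coordinate 1 and an even number of -1 entries. -/
def QOVertex (k : ℕ) : Type :=
  {u : Fin (k + 1) → ℤ // (∀ i, u i = 1 ∨ u i = -1) ∧ u 0 = 1 ∧
    Even ((Finset.univ.filter fun i => u i = -1).card)}

instance (k : ℕ) : Fintype (QOVertex k) :=
  Fintype.ofInjective (fun u : QOVertex k => fun i => decide (u.val i = 1))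
    (by
      intro u v h
      apply Subtype.ext; funext i
      have hi := congrFun h i
      rcases u.prop.1 i with h1 | h1 <;> rcases v.prop.1 i with h2 | h2 <;>
        simp [h1, h2] at hi ⊢)

/-- The quarter orthogonality graph `Γ_k`. -/
def quarterOrthGraph (k : ℕ) : SimpleGraph (QOVertex k) where
  Adj u v := u ≠ v ∧ ∑ i, u.val i * v.val i = 0
  symm := by
    constructor
    rintro u v ⟨hne, h⟩
    refine ⟨hne.symm, ?_⟩
    rw [← h]
    exact Finset.sum_congr rfl fun i _ => mul_comm _ _
  loopless := by constructor; rintro u ⟨hne, -⟩; exact hne rfl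

/-- Vertices of the orthogonality graph `Ω_k`: all ±1-vectors of length `k`. -/
def PMVertex (k : ℕ) : Type :=
  {u : Fin k → ℤ // ∀ i, u i = 1 ∨ u i = -1}

instance (k : ℕ) : Fintype (PMVertex k) :=
  Fintype.ofInjective (fun u : PMVertex k => fun i => decide (u.val i = 1))
    (by
      intro u v h
      apply Subtype.ext; funext i
      have hi := congrFun h i
      rcases u.prop i with h1 | h1 <;> rcases v.prop i with h2 | h2 <;>
        simp [h1, h2] at hi ⊢)

/-- The orthogonality graph `Ω_k`. -/
def orthGraph (k : ℕ) : SimpleGraph (PMVertex k) where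
  Adj u v := u ≠ v ∧ ∑ i, u.val i * v.val i = 0
  symm := by
    constructor
    rintro u v ⟨hne, h⟩
    refine ⟨hne.symm, ?_⟩
    rw [← h]
    exact Finset.sum_congr rfl fun i _ => mul_comm _ _
  loopless := by constructor; rintro u ⟨hne, -⟩; exact hne rfl



lemma trace_psd_nonneg {d : ℕ} {A : Matrix (Fin d) (Fin d) ℂ} (hA : A.PosSemidef) :
    0 ≤ A.trace := by
  exact hA.trace_nonneg

section
open scoped MatrixOrder

lemma trace_mul_psd_nonneg {d : ℕ} {A B : Matrix (Fin d) (Fin d) ℂ}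
    (hA : A.PosSemidef) (hB : B.PosSemidef) : 0 ≤ (A * B).trace := by
  have hS : (CFC.sqrt A).PosSemidef := (CFC.sqrt_nonneg A).posSemidef
  have h1 : CFC.sqrt A * B * (CFC.sqrt A)ᴴ = CFC.sqrt A * B * CFC.sqrt A := by
    rw [hS.1.eq]
  have h2 : (0:ℂ) ≤ (CFC.sqrt A * B * CFC.sqrt A).trace := by
    rw [← h1]
    exact trace_psd_nonneg (hB.mul_mul_conjTranspose_same (CFC.sqrt A))
  calc (0:ℂ) ≤ (CFC.sqrt A * B * CFC.sqrt A).trace := h2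
    _ = (CFC.sqrt A * CFC.sqrt A * B).trace := Matrix.trace_mul_cycle (CFC.sqrt A) B (CFC.sqrt A)
    _ = (A * B).trace := by rw [CFC.sqrt_mul_sqrt_self A hA.nonneg]

end

lemma sum_conj_mul_eq_trace {d : ℕ} {A : Matrix (Fin d) (Fin d) ℂ} (hA : A.IsHermitian)
    (B : Matrix (Fin d) (Fin d) ℂ) :
    ∑ p, ∑ q, (starRingEnd ℂ) (A p q) * B p q = (A * B).trace := by
  rw [Matrix.trace]
  simp only [Matrix.diag, Matrix.mul_apply]
  rw [Finset.sum_comm]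
  refine Finset.sum_congr rfl fun q _ => Finset.sum_congr rfl fun p _ => ?_
  congr 1
  have := hA.apply q p
  rw [← this]; rfl

lemma psd_sum {ι : Type*} {d : ℕ} (s : Finset ι) (f : ι → Matrix (Fin d) (Fin d) ℂ)
    (hf : ∀ i ∈ s, (f i).PosSemidef) : (∑ i ∈ s, f i).PosSemidef :=
  Finset.sum_induction f _ (fun a b ha hb => ha.add hb) Matrix.PosSemidef.zero hf

lemma qIndep_feasible_le {W : Type*} [Fintype W] {m d : ℕ}
    (ρ : Matrix (Fin d) (Fin d) ℂ) (σ : Fin m → W → Matrix (Fin d) (Fin d) ℂ)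
    (hρ : ρ.PosSemidef) (hTr : ρ.trace = 1) (hσ : ∀ i u, (σ i u).PosSemidef)
    (hsum : ∀ i, ∑ u, σ i u = ρ)
    (horth : ∀ i j u, i ≠ j → σ i u * σ j u = 0) :
    m ≤ Fintype.card W := by
  classical
  rcases Nat.eq_zero_or_pos m with rfl | hm
  · exact Nat.zero_le _
  have hρ0 : ρ ≠ 0 := by
    intro h; rw [h] at hTr; simp at hTr
  -- W is nonempty
  have hW : Nonempty W := by
    by_contra hW
    rw [not_nonempty_iff] at hW
    have := hsum ⟨0, hm⟩
    rw [Finset.sum_of_isEmpty] at this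
    exact hρ0 this.symm
  set E := EuclideanSpace ℂ (W × Fin d × Fin d) with hE
  let T : Fin m → E := fun i => (WithLp.equiv 2 _).symm (fun x => σ i x.1 x.2.1 x.2.2)
  let A : E := (WithLp.equiv 2 _).symm (fun x => ρ x.2.1 x.2.2)
  have hinner : ∀ (x y : E), (inner ℂ x y : ℂ) =
      ∑ u : W, ∑ p : Fin d, ∑ q : Fin d,
        (starRingEnd ℂ) (x (u, p, q)) * y (u, p, q) := by
    intro x y
    rw [PiLp.inner_apply, Fintype.sum_prod_type]
    refine Finset.sum_congr rfl fun u _ => ?_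
    rw [Fintype.sum_prod_type]
    simp only [RCLike.inner_apply, mul_comm]
  have hTT : ∀ i j, (inner ℂ (T i) (T j) : ℂ) = ∑ u : W, (σ i u * σ j u).trace := by
    intro i j
    rw [hinner]
    refine Finset.sum_congr rfl fun u _ => ?_
    exact sum_conj_mul_eq_trace (hσ i u).1 (σ j u)
  have hTA : ∀ i, (inner ℂ (T i) A : ℂ) = (ρ * ρ).trace := by
    intro i
    rw [hinner]
    calc ∑ u : W, ∑ p : Fin d, ∑ q : Fin d,
        (starRingEnd ℂ) (T i (u, p, q)) * A (u, p, q)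
        = ∑ u : W, (σ i u * ρ).trace :=
          Finset.sum_congr rfl fun u _ => sum_conj_mul_eq_trace (hσ i u).1 ρ
      _ = ((∑ u : W, σ i u) * ρ).trace := by rw [Finset.sum_mul, Matrix.trace_sum]
      _ = (ρ * ρ).trace := by rw [hsum i]
  have hAA : (inner ℂ A A : ℂ) = (Fintype.card W : ℂ) * (ρ * ρ).trace := by
    rw [hinner]
    calc ∑ u : W, ∑ p : Fin d, ∑ q : Fin d,
        (starRingEnd ℂ) (A (u, p, q)) * A (u, p, q)
        = ∑ _u : W, (ρ * ρ).trace :=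
          Finset.sum_congr rfl fun u _ => sum_conj_mul_eq_trace hρ.1 ρ
      _ = (Fintype.card W : ℂ) * (ρ * ρ).trace := by
          rw [Finset.sum_const, Finset.card_univ, nsmul_eq_mul]
  have hA2 : (Fintype.card W : ℂ) * (ρ * ρ).trace = ((‖A‖ : ℂ)) ^ 2 := by
    rw [← hAA, inner_self_eq_norm_sq_to_K]; norm_cast
  set n : ℕ := Fintype.card W with hn
  have hn0 : 0 < n := Fintype.card_pos
  set sR : ℝ := ‖A‖ ^ 2 / n with hsR
  have hnC : (n : ℂ) ≠ 0 := Nat.cast_ne_zero.mpr hn0.ne'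
  have hsC : (ρ * ρ).trace = (sR : ℂ) := by
    refine mul_left_cancel₀ hnC ?_
    rw [hA2, hsR]
    push_cast
    field_simp
  have hA0 : A ≠ 0 := by
    intro h
    apply hρ0
    ext p q
    have h2 : A (Classical.arbitrary W, p, q) = 0 := by rw [h]; rfl
    exact h2
  have hsRpos : 0 < sR := by
    have : 0 < ‖A‖ ^ 2 := pow_pos (norm_pos_iff.mpr hA0) 2
    exact div_pos this (by exact_mod_cast hn0)
  have hTne : ∀ i, T i ≠ 0 := by
    intro i h
    apply hρ0
    rw [← hsum i]
    refine Finset.sum_eq_zero fun u _ => ?_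
    ext p q
    have h2 : T i (u, p, q) = 0 := by rw [h]; rfl
    exact h2
  have hTle : ∀ i, ‖T i‖ ^ 2 ≤ sR := by
    intro i
    have hpsd : ∀ u : W, (ρ - σ i u).PosSemidef := by
      intro u
      have he : ρ - σ i u = ∑ v ∈ Finset.univ.erase u, σ i v := by
        rw [← hsum i, ← Finset.sum_erase_add Finset.univ _ (Finset.mem_univ u)]
        abel
      rw [he]
      exact psd_sum _ (σ i) fun w _ => hσ i w
    have hle : (inner ℂ (T i) (T i) : ℂ) ≤ (sR : ℂ) := by
      rw [hTT]
      have h1 : ∑ u : W, (σ i u * σ i u).trace ≤ ∑ u : W, (σ i u * ρ).trace := by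
        refine Finset.sum_le_sum fun u _ => ?_
        have h2 := trace_mul_psd_nonneg (hσ i u) (hpsd u)
        rw [Matrix.mul_sub, Matrix.trace_sub, sub_nonneg] at h2
        exact h2
      have h3 : ∑ u : W, (σ i u * ρ).trace = (sR : ℂ) := by
        rw [← Matrix.trace_sum, ← Finset.sum_mul, hsum i, hsC]
      rw [← h3]
      exact h1
    have h4 : (inner ℂ (T i) (T i) : ℂ) = ((‖T i‖ ^ 2 : ℝ) : ℂ) := by
      rw [inner_self_eq_norm_sq_to_K]; norm_cast
    rw [h4] at hle
    exact_mod_cast hle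
  set v : Fin m → E := fun i => ((‖T i‖ : ℝ) : ℂ)⁻¹ • T i with hv
  have hortho : Orthonormal ℂ v := by
    constructor
    · intro i
      rw [hv]
      simp only [norm_smul, norm_inv, Complex.norm_real, Real.norm_eq_abs,
        abs_of_nonneg (norm_nonneg (T i))]
      exact inv_mul_cancel₀ (norm_ne_zero_iff.mpr (hTne i))
    · intro i j hij
      rw [hv]
      simp only [inner_smul_left, inner_smul_right, hTT]
      have hz : ∀ u : W, (σ i u * σ j u).trace = 0 := fun u => by
        rw [horth i j u hij, Matrix.trace_zero]
      rw [Finset.sum_congr rfl fun u _ => hz u]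
      simp
  have hb := hortho.sum_inner_products_le (𝕜 := ℂ) (s := Finset.univ) A
  have hterm : ∀ i : Fin m, sR ≤ ‖(inner ℂ (v i) A : ℂ)‖ ^ 2 := by
    intro i
    have hTpos : 0 < ‖T i‖ ^ 2 := pow_pos (norm_pos_iff.mpr (hTne i)) 2
    have hiv : (inner ℂ (v i) A : ℂ) = ((‖T i‖ : ℝ) : ℂ)⁻¹ * (sR : ℂ) := by
      rw [hv]
      simp only [inner_smul_left, hTA i, hsC, map_inv₀, Complex.conj_ofReal]
    rw [hiv]
    rw [norm_mul, norm_inv, Complex.norm_real, Complex.norm_real, Real.norm_eq_abs,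
      Real.norm_eq_abs, abs_of_nonneg (norm_nonneg (T i)), abs_of_nonneg hsRpos.le,
      mul_pow, inv_pow]
    rw [le_inv_mul_iff₀ hTpos]
    nlinarith [hTle i, hsRpos]
  have hsum2 : (m : ℝ) * sR ≤ ‖A‖ ^ 2 := by
    calc (m : ℝ) * sR = ∑ _i : Fin m, sR := by
          rw [Finset.sum_const, Finset.card_univ, Fintype.card_fin, nsmul_eq_mul]
      _ ≤ ∑ i : Fin m, ‖(inner ℂ (v i) A : ℂ)‖ ^ 2 := Finset.sum_le_sum fun i _ => hterm i
      _ ≤ ‖A‖ ^ 2 := hb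
  have hAn : ‖A‖ ^ 2 = (n : ℝ) * sR := by
    rw [hsR]
    field_simp
  rw [hAn] at hsum2
  exact_mod_cast le_of_mul_le_mul_right hsum2 hsRpos

/-- if `χ*(G) · α*(G) < |V(G)|` and `t = χ*(G)`, then
`α*(G^{+t}) > t · α*(G)`. -/
theorem qIndep_disjoint_union_strict {V : Type} [Fintype V] (G : SimpleGraph V)
    (h : qChromNum G * qIndepNum G < Fintype.card V) (t : ℕ) (ht : t = qChromNum G) :
    t * qIndepNum G < qIndepNum (copies G t) := by
  classical
  subst ht
  have hcard : 0 < Fintype.card V := lt_of_le_of_lt (Nat.zero_le _) h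
  have hV : Nonempty V := Fintype.card_pos_iff.mp hcard
  let e := Fintype.equivFin V
  -- the set defining qChromNum is nonempty
  have hne : {m | ∃ (d : ℕ) (ρ : Matrix (Fin d) (Fin d) ℂ)
      (σ : V → Fin m → Matrix (Fin d) (Fin d) ℂ),
      ρ.PosSemidef ∧ ρ.trace = 1 ∧ (∀ x i, (σ x i).PosSemidef) ∧
      (∀ x, ∑ i, σ x i = ρ) ∧
      ∀ x y i, G.Adj x y → σ x i * σ y i = 0}.Nonempty := by
    refine ⟨Fintype.card V, 1, 1, fun x i => if i = e x then 1 else 0, ?_, ?_, ?_, ?_, ?_⟩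
    · exact Matrix.PosSemidef.one
    · simp [Matrix.trace_one]
    · intro x i
      by_cases hi : i = e x <;> simp [hi, Matrix.PosSemidef.one, Matrix.PosSemidef.zero]
    · intro x
      simp
    · intro x y i hxy
      have hxyne : e x ≠ e y := fun hc => G.ne_of_adj hxy (e.injective hc)
      by_cases hx : i = e x
      · have : i ≠ e y := by rw [hx]; exact hxyne
        simp [hx, this, G.ne_of_adj hxy]
      · simp [hx]
  have hmem : ∃ (d : ℕ) (ρ : Matrix (Fin d) (Fin d) ℂ)
      (σ : V → Fin (qChromNum G) → Matrix (Fin d) (Fin d) ℂ),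
      ρ.PosSemidef ∧ ρ.trace = 1 ∧ (∀ x i, (σ x i).PosSemidef) ∧
      (∀ x, ∑ i, σ x i = ρ) ∧
      ∀ x y i, G.Adj x y → σ x i * σ y i = 0 := Nat.sInf_mem hne
  obtain ⟨d, ρ, σc, hρ, hTr, hσc, hsumc, hcol⟩ := hmem
  -- construct a strategy with card V messages for copies G (qChromNum G)
  have hmemS : Fintype.card V ∈ {m | ∃ (d : ℕ) (ρ : Matrix (Fin d) (Fin d) ℂ)
      (σ : Fin m → V × Fin (qChromNum G) → Matrix (Fin d) (Fin d) ℂ),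
      ρ.PosSemidef ∧ ρ.trace = 1 ∧ (∀ i u, (σ i u).PosSemidef) ∧
      (∀ i, ∑ u, σ i u = ρ) ∧
      ∀ i j u v, i ≠ j → (u = v ∨ (copies G (qChromNum G)).Adj u v) → σ i u * σ j v = 0} := by
    refine ⟨d, ρ, fun i x => if x.1 = e.symm i then σc x.1 x.2 else 0,
      hρ, hTr, ?_, ?_, ?_⟩
    · intro i x
      by_cases hx : x.1 = e.symm i
      · simpa [hx] using hσc _ _
      · simp [hx, Matrix.PosSemidef.zero]
    · intro i
      rw [Fintype.sum_prod_type]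
      have hrow : ∀ a : V, (∑ k : Fin (qChromNum G), if a = e.symm i then σc a k else 0)
          = if a = e.symm i then ρ else 0 := by
        intro a
        by_cases ha : a = e.symm i
        · subst ha
          simpa using hsumc _
        · simp [ha]
      simp only [hrow]
      simp
    · rintro i j ⟨a, k⟩ ⟨b, l⟩ hij hcase
      by_cases ha : a = e.symm i
      · by_cases hb : b = e.symm j
        · have hab : a ≠ b := by
            rw [ha, hb]
            intro hcontra
            exact hij (e.symm.injective hcontra)
          rcases hcase with hcase | hcase
          · exact absurd (congrArg Prod.fst hcase) hab
          · obtain ⟨hkl, hadj⟩ := hcase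
            simp only at hkl hadj
            subst hkl
            subst ha
            subst hb
            simpa using hcol _ _ k hadj
        · simp [hb]
      · simp [ha]
  -- boundedness of the defining set for qIndepNum (copies G (qChromNum G))
  have hbdd : BddAbove {m | ∃ (d : ℕ) (ρ : Matrix (Fin d) (Fin d) ℂ)
      (σ : Fin m → V × Fin (qChromNum G) → Matrix (Fin d) (Fin d) ℂ),
      ρ.PosSemidef ∧ ρ.trace = 1 ∧ (∀ i u, (σ i u).PosSemidef) ∧
      (∀ i, ∑ u, σ i u = ρ) ∧
      ∀ i j u v, i ≠ j → (u = v ∨ (copies G (qChromNum G)).Adj u v) → σ i u * σ j v = 0} := by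
    refine ⟨Fintype.card (V × Fin (qChromNum G)), ?_⟩
    rintro m ⟨d', ρ', σ', hρ', hTr', hσ', hsum', horth'⟩
    exact qIndep_feasible_le ρ' σ' hρ' hTr' hσ' hsum'
      fun i j u hij => horth' i j u u hij (Or.inl rfl)
  have hle : Fintype.card V ≤ qIndepNum (copies G (qChromNum G)) := le_csSup hbdd hmemS
  exact lt_of_lt_of_le h hle


end ZeroError
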